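/- Let B be the zig-zag algebra of type A₁, i.e., B = k⟨1, X⟩/(X²) with X in degree 2, let B' = B ⊗_k B regarded as a (B,B)-bimodule, and define complexes of (B,B)-bimodules Σ = [B'⟨−2⟩ →m B] (multiplication map, B in cohomological degree 0) and Σ⁻¹ = [B →c B'⟨2⟩] (the adjoint/coevaluation map b ↦ b·(1⊗1 coevaluation), B in degree 0). Then Σ ⊗_B Σ⁻¹ is homotopy equivalent to B as a complex of (B,B)-bimodules. -/

import Mathlib

set_option synthInstance.maxHeartbeats 1000000
set_option maxHeartbeats 1600000


open scoped TensorProduct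

namespace ZigZagSphericalTwist

variable (k : Type) [Field k]

/-- The type `A₁` zig-zag algebra `B = k[X]/(X²)`. -/
noncomputable abbrev B : Type := DualNumber k

/-- `B' = B ⊗ B`, the bimodule underlying the spherical twist. -/
noncomputable abbrev E : Type := B k ⊗[k] B k

/-- `B' ⊗_B B' ≅ B ⊗ B ⊗ B`. -/
noncomputable abbrev B₃ : Type := B k ⊗[k] (B k ⊗[k] B k)

noncomputable def ε : B k := DualNumber.eps

/-- Multiplication `B' → B`. -/
noncomputable def mul2 : E k →ₗ[k] B k := LinearMap.mul' k (B k)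

/-- The coevaluation `B → B'⟨2⟩`, `b ↦ (b·X)⊗1 + b⊗X` (dual of multiplication for the
Frobenius trace on `B`). -/
noncomputable def coev : B k →ₗ[k] E k :=
  (((TensorProduct.mk k (B k) (B k)).flip (1 : B k)).comp (LinearMap.mulRight k (ε k))) +
    ((TensorProduct.mk k (B k) (B k)).flip (ε k))

/-- `B ⊗ B ⊗ B → B'`, multiplying the first two factors. -/
noncomputable def m3 : B₃ k →ₗ[k] E k :=
  (LinearMap.rTensor (B k) (mul2 k)).comp
    (TensorProduct.assoc k (B k) (B k) (B k)).symm.toLinearMap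

/-- The degree `−1` differential of the total complex of `Σ ⊗_B Σ⁻¹`. -/
noncomputable def dm1 : E k →ₗ[k] B k × B₃ k :=
  LinearMap.prod (mul2 k) ((-1 : k) • (LinearMap.lTensor (B k) (coev k) : E k →ₗ[k] B₃ k))

/-- The degree `0` differential of the total complex of `Σ ⊗_B Σ⁻¹`. -/
noncomputable def d0 : B k × B₃ k →ₗ[k] E k :=
  LinearMap.coprod (coev k) (m3 k)

/-- Left `B`-action on `B`. -/
noncomputable def lB (b : B k) : B k →ₗ[k] B k := LinearMap.mulLeft k b
/-- Right `B`-action on `B`. -/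
noncomputable def rB (b : B k) : B k →ₗ[k] B k := LinearMap.mulRight k b
/-- Left `B`-action on `B' = B ⊗ B` (on the first factor). -/
noncomputable def lE (b : B k) : E k →ₗ[k] E k := LinearMap.rTensor (B k) (LinearMap.mulLeft k b)
/-- Right `B`-action on `B' = B ⊗ B` (on the second factor). -/
noncomputable def rE (b : B k) : E k →ₗ[k] E k := LinearMap.lTensor (B k) (LinearMap.mulRight k b)
/-- Left `B`-action on `B ⊗ B ⊗ B` (on the first factor). -/
noncomputable def lB3 (b : B k) : B₃ k →ₗ[k] B₃ k :=
  LinearMap.rTensor (B k ⊗[k] B k) (LinearMap.mulLeft k b)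
/-- Right `B`-action on `B ⊗ B ⊗ B` (on the last factor). -/
noncomputable def rB3 (b : B k) : B₃ k →ₗ[k] B₃ k :=
  LinearMap.lTensor (B k) (LinearMap.lTensor (B k) (LinearMap.mulRight k b))

/-- Left `B`-action on the middle term `B ⊕ (B' ⊗_B B')` of the total complex. -/
noncomputable def lP (b : B k) : B k × B₃ k →ₗ[k] B k × B₃ k :=
  (lB k b).prodMap (lB3 k b)
/-- Right `B`-action on the middle term `B ⊕ (B' ⊗_B B')` of the total complex. -/
noncomputable def rP (b : B k) : B k × B₃ k →ₗ[k] B k × B₃ k :=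
  (rB k b).prodMap (rB3 k b)


/-! ### Auxiliary maps for the homotopy equivalence -/

/-- The Frobenius trace `τ : B → k`, `a + bε ↦ b`. -/
noncomputable def tr : B k →ₗ[k] k := TrivSqZeroExt.sndHom k k

/-- `B ⊗ B → B`, `y ⊗ z ↦ τ(y) • z`. -/
noncomputable def tr' : E k →ₗ[k] B k :=
  (TensorProduct.lid k (B k)).toLinearMap.comp (LinearMap.rTensor (B k) (tr k))

/-- `Φ : B₃ → B`, `x ⊗ y ⊗ z ↦ τ(y) • (x*z)`. -/
noncomputable def Phi : B₃ k →ₗ[k] B k := (mul2 k).comp (LinearMap.lTensor (B k) (tr' k))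

/-- `Ψ : B → B₃`, `b ↦ -(b ε ⊗ 1 ⊗ 1 + b ⊗ 1 ⊗ ε)`. -/
noncomputable def Psi : B k →ₗ[k] B₃ k :=
  (-1 : k) • ((((TensorProduct.mk k (B k) (B k ⊗[k] B k)).flip
        ((1 : B k) ⊗ₜ[k] (1 : B k))).comp (LinearMap.mulRight k (ε k)))
  + ((TensorProduct.mk k (B k) (B k ⊗[k] B k)).flip ((1 : B k) ⊗ₜ[k] (ε k))))

/-- `H : B₃ → E`, `x ⊗ y ⊗ z ↦ -τ(y) • (x ⊗ z)`. -/
noncomputable def HH : B₃ k →ₗ[k] E k := (-1 : k) • (LinearMap.lTensor (B k) (tr' k))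

/-- `H₁ : E → B₃`, `x ⊗ y ↦ x ⊗ 1 ⊗ y`. -/
noncomputable def H1 : E k →ₗ[k] B₃ k :=
  LinearMap.lTensor (B k) ((TensorProduct.mk k (B k) (B k)) 1)

@[simp] lemma tr'_tmul (y z : B k) : tr' k (y ⊗ₜ[k] z) = (TrivSqZeroExt.snd y) • z := by
  simp [tr', tr]

@[simp] lemma Phi_tmul (x y z : B k) :
    Phi k (x ⊗ₜ[k] (y ⊗ₜ[k] z)) = (TrivSqZeroExt.snd y) • (x * z) := by
  simp [Phi, mul2]

@[simp] lemma Psi_apply (b : B k) :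
    Psi k b = (-1 : k) • ((b * ε k) ⊗ₜ[k] ((1 : B k) ⊗ₜ[k] (1 : B k)))
      + (-1 : k) • (b ⊗ₜ[k] ((1 : B k) ⊗ₜ[k] (ε k))) := by
  simp [Psi, smul_add]
  module

@[simp] lemma HH_tmul (x y z : B k) :
    HH k (x ⊗ₜ[k] (y ⊗ₜ[k] z)) = (-(TrivSqZeroExt.snd y) : k) • (x ⊗ₜ[k] z) := by
  have h : ∀ (c : k) (t : E k), (-c) • t = -(c • t) := fun c t => neg_smul c t
  simp [HH, h]

@[simp] lemma H1_tmul (x y : B k) :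
    H1 k (x ⊗ₜ[k] y) = x ⊗ₜ[k] ((1 : B k) ⊗ₜ[k] y) := by
  simp [H1]

@[simp] lemma mul2_tmul (x y : B k) : mul2 k (x ⊗ₜ[k] y) = x * y := rfl

@[simp] lemma coev_apply (b : B k) :
    coev k b = (b * ε k) ⊗ₜ[k] (1 : B k) + b ⊗ₜ[k] (ε k) := by
  simp [coev]

@[simp] lemma m3_tmul (x y z : B k) :
    m3 k (x ⊗ₜ[k] (y ⊗ₜ[k] z)) = (x * y) ⊗ₜ[k] z := by
  simp [m3, mul2]

lemma B_decomp (b : B k) :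
    b = (TrivSqZeroExt.fst b) • (1 : B k) + (TrivSqZeroExt.snd b) • (ε k) := by
  ext <;> simp [ε]

@[simp] lemma eps_mul_eps : (ε k) * (ε k) = 0 := DualNumber.eps_mul_eps

@[simp] lemma snd_eps : TrivSqZeroExt.snd (ε k) = (1 : k) := rfl
@[simp] lemma fst_eps : TrivSqZeroExt.fst (ε k) = (0 : k) := rfl


/-- Linear maps out of `B` are determined by their values on `1` and `ε`. -/
lemma Bext {M : Type} [AddCommMonoid M] [Module k M] {f g : B k →ₗ[k] M}
    (h1 : f 1 = g 1) (he : f (ε k) = g (ε k)) : f = g := by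
  ext b
  rw [B_decomp k b]
  simp [h1, he]

lemma Phi_lB3 (b : B k) :
    (Phi k).comp (lB3 k b) = (LinearMap.mulLeft k b).comp (Phi k) := by
  apply TensorProduct.ext
  apply Bext k <;>
    (apply TensorProduct.ext; apply Bext k <;> apply Bext k) <;>
    simp [lB3, mul_comm, mul_left_comm, mul_smul_comm, smul_mul_assoc]

lemma Phi_rB3 (b : B k) :
    (Phi k).comp (rB3 k b) = (LinearMap.mulRight k b).comp (Phi k) := by
  apply TensorProduct.ext
  apply Bext k <;>
    (apply TensorProduct.ext; apply Bext k <;> apply Bext k) <;>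
    simp [rB3, mul_comm, mul_left_comm, mul_smul_comm, smul_mul_assoc]


lemma Psi_mulLeft (b : B k) :
    (Psi k).comp (LinearMap.mulLeft k b) = (lB3 k b).comp (Psi k) := by
  apply Bext k <;>
    simp [lB3, map_smul, LinearMap.rTensor_tmul, mul_assoc]

lemma Psi_mulRight (b : B k) :
    (Psi k).comp (LinearMap.mulRight k b) = (rB3 k b).comp (Psi k) := by
  apply Bext k <;>
    (rw [B_decomp k b]
     simp only [LinearMap.comp_apply, LinearMap.mulRight_apply, Psi_apply, rB3, map_smul,
       map_add, LinearMap.lTensor_tmul, one_mul, mul_one, mul_add, add_mul,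
       smul_mul_assoc, mul_smul_comm, eps_mul_eps, mul_zero, zero_mul, smul_zero,
       TensorProduct.tmul_add, TensorProduct.add_tmul, ← TensorProduct.smul_tmul',
       TensorProduct.tmul_smul, TensorProduct.tmul_zero, TensorProduct.zero_tmul, map_zero,
       zero_smul]
     module)

lemma HH_lB3 (b : B k) : (HH k).comp (lB3 k b) = (lE k b).comp (HH k) := by
  apply TensorProduct.ext
  apply Bext k <;>
    (apply TensorProduct.ext; apply Bext k <;> apply Bext k) <;>
    simp [lB3, lE, TensorProduct.smul_tmul', TensorProduct.tmul_smul]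

lemma HH_rB3 (b : B k) : (HH k).comp (rB3 k b) = (rE k b).comp (HH k) := by
  apply TensorProduct.ext
  apply Bext k <;>
    (apply TensorProduct.ext; apply Bext k <;> apply Bext k) <;>
    (rw [B_decomp k b];
     simp [map_add, map_neg, map_sub, map_smul, LinearMap.rTensor_tmul, LinearMap.lTensor_tmul,
       neg_zero, rB3, rE, mul_add, add_mul, mul_comm, mul_left_comm,
       TensorProduct.smul_tmul', TensorProduct.tmul_add, TensorProduct.tmul_smul, smul_smul])

lemma H1_lE (b : B k) : (H1 k).comp (lE k b) = (lB3 k b).comp (H1 k) := by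
  apply TensorProduct.ext
  apply Bext k <;> apply Bext k <;> simp [lE, lB3]

lemma H1_rE (b : B k) : (H1 k).comp (rE k b) = (rB3 k b).comp (H1 k) := by
  apply TensorProduct.ext
  apply Bext k <;> apply Bext k <;> simp [rE, rB3]


section cancel
variable {M : Type} [AddCommGroup M] [Module k M]

lemma c1 (a : M) : a + (-1 : k) • a = 0 := by module
lemma c1' (a : M) : (-1 : k) • a + a = 0 := by module
lemma c2 (a b : M) : a + b + ((-1 : k) • a + (-1 : k) • b) = 0 := by module
lemma c3 (a b c : M) : b + c + a + ((-1 : k) • a + (-1 : k) • c) = b := by module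
lemma c4 (a b : M) : b + a + (-1 : k) • a = b := by module

end cancel

/-- The tensor product `Σ ⊗_B Σ⁻¹` of the spherical twist complex
`Σ = [B'⟨−2⟩ → B]` with its inverse `Σ⁻¹ = [B → B'⟨2⟩]` is homotopy equivalent to `B`
as a complex of `(B,B)`-bimodules: its total complex
`B' → B ⊕ (B' ⊗_B B') → B'` admits a homotopy equivalence (through bimodule maps) with
the complex `B` concentrated in degree `0`. -/
theorem twist_comp_inverse_twist_homotopic_to_identity [CharZero k] :
    ∃ (φ : B k × B₃ k →ₗ[k] B k) (ψ : B k →ₗ[k] B k × B₃ k)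
      (h₀ : B k × B₃ k →ₗ[k] E k) (h₁ : E k →ₗ[k] B k × B₃ k),
      -- all four maps are maps of (B,B)-bimodules
      (∀ b x, φ (lP k b x) = b * φ x) ∧ (∀ b x, φ (rP k b x) = φ x * b) ∧
      (∀ b x, ψ (b * x) = lP k b (ψ x)) ∧ (∀ b x, ψ (x * b) = rP k b (ψ x)) ∧
      (∀ b x, h₀ (lP k b x) = lE k b (h₀ x)) ∧ (∀ b x, h₀ (rP k b x) = rE k b (h₀ x)) ∧
      (∀ b x, h₁ (lE k b x) = lP k b (h₁ x)) ∧ (∀ b x, h₁ (rE k b x) = rP k b (h₁ x)) ∧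
      -- `φ` and `ψ` are chain maps between the total complex and `B`
      φ.comp (dm1 k) = 0 ∧ (d0 k).comp ψ = 0 ∧
      -- `φ ∘ ψ = id` and `h₀, h₁` give a homotopy from `ψ ∘ φ` to the identity
      φ.comp ψ = (LinearMap.id : B k →ₗ[k] B k) ∧
      (h₀.comp (dm1 k) = (LinearMap.id : E k →ₗ[k] E k)) ∧
      ((dm1 k).comp h₀ + h₁.comp (d0 k) + ψ.comp φ = (LinearMap.id : B k × B₃ k →ₗ[k] B k × B₃ k)) ∧
      ((d0 k).comp h₁ = (LinearMap.id : E k →ₗ[k] E k)) := by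
  refine ⟨(LinearMap.id).coprod (Phi k), (LinearMap.id).prod (Psi k),
    (0 : B k →ₗ[k] E k).coprod (HH k), (0 : E k →ₗ[k] B k).prod (H1 k),
    ?_, ?_, ?_, ?_, ?_, ?_, ?_, ?_, ?_, ?_, ?_, ?_, ?_, ?_⟩
  · intro b x
    have h := LinearMap.congr_fun (Phi_lB3 k b) x.2
    simp only [LinearMap.comp_apply, LinearMap.mulLeft_apply] at h
    simp [lP, lB, h, mul_add]
  · intro b x
    have h := LinearMap.congr_fun (Phi_rB3 k b) x.2
    simp only [LinearMap.comp_apply, LinearMap.mulRight_apply] at h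
    simp [rP, rB, h, add_mul]
  · intro b x
    have h := LinearMap.congr_fun (Psi_mulLeft k b) x
    simp only [LinearMap.comp_apply, LinearMap.mulLeft_apply] at h
    simp [lP, lB, h]
  · intro b x
    have h := LinearMap.congr_fun (Psi_mulRight k b) x
    simp only [LinearMap.comp_apply, LinearMap.mulRight_apply] at h
    simp [rP, rB, h]
  · intro b x
    have h := LinearMap.congr_fun (HH_lB3 k b) x.2
    simp only [LinearMap.comp_apply] at h
    simp [lP, h]
  · intro b x
    have h := LinearMap.congr_fun (HH_rB3 k b) x.2
    simp only [LinearMap.comp_apply] at h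
    simp [rP, h]
  · intro b x
    have h := LinearMap.congr_fun (H1_lE k b) x
    simp only [LinearMap.comp_apply] at h
    simp [lP, lB, h]
  · intro b x
    have h := LinearMap.congr_fun (H1_rE k b) x
    simp only [LinearMap.comp_apply] at h
    simp [rP, rB, h]
  · -- φ ∘ dm1 = 0
    apply TensorProduct.ext
    apply Bext k <;> apply Bext k <;>
      simp [dm1, map_smul, map_add, TensorProduct.tmul_add, TensorProduct.tmul_smul, ε]
  · -- d0 ∘ ψ = 0
    apply Bext k <;>
      (simp only [LinearMap.comp_apply, LinearMap.prod_apply, Pi.prod, Function.prod_apply, d0,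
         LinearMap.coprod_apply, LinearMap.id_coe, id_eq, Psi_apply, coev_apply,
         zero_add, add_zero, LinearMap.map_zero, map_zero, smul_smul, one_smul, neg_mul, mul_neg,
         neg_neg, Prod.fst_add, Prod.snd_add, Prod.fst_zero, Prod.snd_zero, map_add, map_smul, m3_tmul, one_mul, mul_one, eps_mul_eps, zero_mul, mul_zero,
         TensorProduct.zero_tmul, TensorProduct.tmul_zero, smul_zero, LinearMap.zero_apply]
      ) <;>
      (first
        | (show ε k ⊗ₜ[k] (1 : B k) + (1 : B k) ⊗ₜ[k] ε k +
              ((-1:k) • (ε k ⊗ₜ[k] (1 : B k)) + (-1:k) • ((1 : B k) ⊗ₜ[k] ε k)) = 0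
           module)
        | (show ε k ⊗ₜ[k] ε k + (-1:k) • (ε k ⊗ₜ[k] ε k) = (0 : E k)
           module))
  · -- φ ∘ ψ = id
    apply Bext k <;> simp
  · -- h₀ ∘ dm1 = id
    apply TensorProduct.ext
    apply Bext k <;> apply Bext k <;>
      (simp only [LinearMap.compr₂_apply, LinearMap.compr₂ₛₗ_apply, Function.prod_apply, TensorProduct.mk_apply, LinearMap.comp_apply,
         dm1, zero_add, add_zero, LinearMap.map_zero, map_zero, smul_smul, one_smul, neg_mul, mul_neg,
         neg_neg, Prod.fst_add, Prod.snd_add, Prod.fst_zero, Prod.snd_zero, LinearMap.prod_apply, Pi.prod, LinearMap.coprod_apply, LinearMap.smul_apply,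
         LinearMap.lTensor_tmul, coev_apply, map_add, map_smul, mul2_tmul,
         TensorProduct.tmul_add, TensorProduct.tmul_smul, HH_tmul, snd_eps, fst_eps,
         TrivSqZeroExt.snd_one, one_mul, mul_one, eps_mul_eps, zero_mul, mul_zero,
         TensorProduct.zero_tmul, TensorProduct.tmul_zero, smul_zero, zero_smul, neg_zero,
         LinearMap.zero_apply, LinearMap.id_apply])
  · -- middle homotopy identity
    apply LinearMap.prod_ext <;>
      [apply Bext k;
       (apply TensorProduct.ext; apply Bext k <;>
          (apply TensorProduct.ext; apply Bext k <;> apply Bext k))] <;>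
      (simp only [LinearMap.comp_apply, LinearMap.add_apply, LinearMap.coe_inl,
         LinearMap.coe_inr, LinearMap.compr₂_apply, LinearMap.compr₂ₛₗ_apply, Function.prod_apply, TensorProduct.mk_apply,
         dm1, d0, lP, rP, lB, rB, lB3, rB3, lE, rE, zero_add, add_zero, LinearMap.map_zero, map_zero, smul_smul, one_smul, neg_mul, mul_neg,
         neg_neg, Prod.fst_add, Prod.snd_add, Prod.fst_zero, Prod.snd_zero, 
         LinearMap.prod_apply, Pi.prod, LinearMap.coprod_apply, LinearMap.smul_apply,
         LinearMap.lTensor_tmul, LinearMap.rTensor_tmul, coev_apply, map_add, map_smul,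
         mul2_tmul, m3_tmul, Phi_tmul, Psi_apply, HH_tmul, H1_tmul, snd_eps, fst_eps,
         TrivSqZeroExt.snd_one, one_mul, mul_one, eps_mul_eps, zero_mul, mul_zero,
         TensorProduct.tmul_add, TensorProduct.tmul_smul, TensorProduct.zero_tmul,
         TensorProduct.tmul_zero, smul_zero, zero_smul, neg_zero, map_zero,
         LinearMap.zero_apply, LinearMap.id_apply, LinearMap.id_coe, id_eq, Prod.mk_add_mk,
         Prod.smul_mk, Prod.ext_iff]
      ) <;>
      (constructor <;>
        first
          | trivial
          | (show (-1 : k) • (1 : B k) + 1 = 0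
             module)
          | (show (-1 : k) • ε k + ε k = 0
             module)
          | (show ε k ⊗ₜ[k] ((1:B k) ⊗ₜ[k] (1:B k)) + (1:B k) ⊗ₜ[k] ((1:B k) ⊗ₜ[k] ε k) +
                ((-1:k) • (ε k ⊗ₜ[k] ((1:B k) ⊗ₜ[k] (1:B k))) +
                  (-1:k) • ((1:B k) ⊗ₜ[k] ((1:B k) ⊗ₜ[k] ε k))) = (0 : B₃ k)
             module)
          | (show ε k ⊗ₜ[k] ((1:B k) ⊗ₜ[k] ε k) +
                (-1:k) • (ε k ⊗ₜ[k] ((1:B k) ⊗ₜ[k] ε k)) = (0 : B₃ k)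
             module)
          | (show (1:B k) ⊗ₜ[k] (ε k ⊗ₜ[k] (1:B k)) + (1:B k) ⊗ₜ[k] ((1:B k) ⊗ₜ[k] ε k) +
                ε k ⊗ₜ[k] ((1:B k) ⊗ₜ[k] (1:B k)) +
                ((-1:k) • (ε k ⊗ₜ[k] ((1:B k) ⊗ₜ[k] (1:B k))) +
                  (-1:k) • ((1:B k) ⊗ₜ[k] ((1:B k) ⊗ₜ[k] ε k))) =
                (1:B k) ⊗ₜ[k] (ε k ⊗ₜ[k] (1:B k))
             module)
          | (show (1:B k) ⊗ₜ[k] (ε k ⊗ₜ[k] ε k) + ε k ⊗ₜ[k] ((1:B k) ⊗ₜ[k] ε k) +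
                (-1:k) • (ε k ⊗ₜ[k] ((1:B k) ⊗ₜ[k] ε k)) = (1:B k) ⊗ₜ[k] (ε k ⊗ₜ[k] ε k)
             module)
          | (show ε k ⊗ₜ[k] (ε k ⊗ₜ[k] (1:B k)) + ε k ⊗ₜ[k] ((1:B k) ⊗ₜ[k] ε k) +
                (-1:k) • (ε k ⊗ₜ[k] ((1:B k) ⊗ₜ[k] ε k)) = ε k ⊗ₜ[k] (ε k ⊗ₜ[k] (1:B k))
             module))
  · -- d0 ∘ h₁ = id
    apply TensorProduct.ext
    apply Bext k <;> apply Bext k <;> simp [d0]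


end ZigZagSphericalTwist
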